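/- (Sum of limits) With P-probability 1 over sequences sampled from P: the limit lim_{t→∞} w(Q | x_{<t}) exists for every Q ∈ ℳ, and ∑_{Q∈ℳ} lim_{t→∞} w(Q | x_{<t}) = 1. -/

import Mathlib

open MeasureTheory Filter
open scoped ENNReal

/-- The cylinder set of infinite sequences agreeing with `x` on the first `t` coordinates,
i.e. the set of sequences beginning with the prefix `x_{<t}`. -/
def cyl {X : Type*} (x : ℕ → X) (t : ℕ) : Set (ℕ → X) := {y | ∀ i < t, y i = x i}

section Aux

variable {X : Type*} [Fintype X] [Nonempty X] [MeasurableSpace X] [MeasurableSingletonClass X]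

/-- Projection to the first `t` coordinates. -/
def proj (X : Type*) (t : ℕ) : (ℕ → X) → (Fin t → X) := fun y i => y i

lemma measurable_proj {X : Type*} [MeasurableSpace X] (t : ℕ) : Measurable (proj X t) :=
  measurable_pi_lambda _ fun i => measurable_pi_apply _

lemma cyl_eq {X : Type*} (x : ℕ → X) (t : ℕ) : cyl x t = proj X t ⁻¹' {proj X t x} := by
  ext y
  simp only [cyl, Set.mem_setOf_eq, Set.mem_preimage, Set.mem_singleton_iff, funext_iff, proj]
  constructor
  · intro h i; exact h i i.isLt
  · intro h i hi; exact h ⟨i, hi⟩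

lemma measurableSet_cyl (x : ℕ → X) (t : ℕ) : MeasurableSet (cyl x t) := by
  rw [cyl_eq]; exact measurable_proj t (measurableSet_singleton _)

/-- The filtration of the first `t` coordinates. -/
def filt (X : Type*) [MeasurableSpace X] :
    Filtration ℕ (inferInstance : MeasurableSpace (ℕ → X)) where
  seq t := MeasurableSpace.comap (proj X t) inferInstance
  mono' := by
    intro s t hst
    show MeasurableSpace.comap (proj X s) inferInstance
        ≤ MeasurableSpace.comap (proj X t) inferInstance
    have h : proj X s = (fun v : Fin t → X => fun i : Fin s => v (Fin.castLE hst i)) ∘ proj X t :=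
      rfl
    rw [h, ← MeasurableSpace.comap_comp]
    exact MeasurableSpace.comap_mono
      (Measurable.comap_le (measurable_pi_lambda _ fun i => measurable_pi_apply _))
  le' t := Measurable.comap_le (measurable_proj t)

lemma iSup_filt (X : Type*) [MeasurableSpace X] :
    (⨆ t, filt X t) = (inferInstance : MeasurableSpace (ℕ → X)) := by
  refine le_antisymm (iSup_le fun t => (filt X).le t) ?_
  have h2 : (⨆ i : ℕ, MeasurableSpace.comap (fun y : ℕ → X => y i) inferInstance)
      ≤ ⨆ t, filt X t := by
    refine iSup_le fun i => ?_
    have he : (fun y : ℕ → X => y i)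
        = (fun v : Fin (i+1) → X => v ⟨i, Nat.lt_succ_self i⟩) ∘ proj X (i+1) := rfl
    rw [he, ← MeasurableSpace.comap_comp]
    refine le_trans ?_ (le_iSup _ (i+1))
    exact MeasurableSpace.comap_mono (Measurable.comap_le (measurable_pi_apply _))
  exact le_of_eq_of_le rfl h2

end Aux

section CE

variable {X : Type*} [Fintype X] [Nonempty X] [MeasurableSpace X] [MeasurableSingletonClass X]

lemma atom_disj (t : ℕ) : Set.Pairwise (Set.univ : Set (Fin t → X))
    (Function.onFun Disjoint fun v => proj X t ⁻¹' {v}) := by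
  intro a _ b _ hab
  simp only [Function.onFun, Set.disjoint_left]
  rintro y hy hy'
  exact hab (hy.symm.trans hy')

lemma condexp_eq (ξ : Measure (ℕ → X)) [IsProbabilityMeasure ξ]
    (ν : Measure (ℕ → X)) [IsFiniteMeasure ν] (hν : ν ≪ ξ) (t : ℕ) :
    (fun x => (ν (cyl x t)).toReal / (ξ (cyl x t)).toReal)
      =ᵐ[ξ] ξ[fun x => (ν.rnDeriv ξ x).toReal | filt X t] := by
  classical
  have hm : filt X t ≤ (inferInstance : MeasurableSpace (ℕ → X)) := (filt X).le t
  set h : (Fin t → X) → ℝ :=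
    fun v => (ν (proj X t ⁻¹' {v})).toReal / (ξ (proj X t ⁻¹' {v})).toReal with hh
  have hgh : (fun x => (ν (cyl x t)).toReal / (ξ (cyl x t)).toReal) = h ∘ proj X t := by
    funext x
    simp only [Function.comp_apply, hh, cyl_eq]
  -- measurability of atoms
  have hatom : ∀ v : Fin t → X, MeasurableSet (proj X t ⁻¹' {v}) :=
    fun v => measurable_proj t (measurableSet_singleton v)
  -- integrability of g
  have hmeas : Measurable (h ∘ proj X t) :=
    (measurable_of_countable h).comp (measurable_proj t)
  have hint : Integrable (h ∘ proj X t) ξ := by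
    refine (MemLp.of_bound hmeas.aestronglyMeasurable
      (Finset.univ.sup' (Finset.univ_nonempty) fun v => ‖h v‖) ?_).integrable le_rfl
    exact Filter.Eventually.of_forall fun x =>
      Finset.le_sup' (f := fun v => ‖h v‖) (Finset.mem_univ (proj X t x))
  -- atom integral
  have hatomint : ∀ v : Fin t → X,
      ∫ x in proj X t ⁻¹' {v}, (h ∘ proj X t) x ∂ξ = (ν (proj X t ⁻¹' {v})).toReal := by
    intro v
    have hc : ∀ x ∈ proj X t ⁻¹' {v}, (h ∘ proj X t) x = h v := by
      intro x hx; simp only [Function.comp_apply, Set.mem_preimage,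
        Set.mem_singleton_iff] at hx ⊢; rw [hx]
    rw [setIntegral_congr_fun (hatom v) hc, setIntegral_const, smul_eq_mul]
    by_cases hz : ξ (proj X t ⁻¹' {v}) = 0
    · have : ν (proj X t ⁻¹' {v}) = 0 := hν hz
      simp [hz, this, Measure.real]
    · simp only [hh, Measure.real]
      rw [mul_div_cancel₀]
      exact ENNReal.toReal_ne_zero.mpr ⟨hz, measure_ne_top _ _⟩
  rw [hgh]
  refine ae_eq_condExp_of_forall_setIntegral_eq hm Measure.integrable_toReal_rnDeriv
    (fun s _ _ => hint.integrableOn) ?_ ?_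
  · rintro s hs -
    obtain ⟨S, -, rfl⟩ := hs
    have hdecomp : proj X t ⁻¹' S = ⋃ v ∈ S.toFinset, proj X t ⁻¹' {v} := by
      ext y; simp [Set.mem_iUnion]
    rw [Measure.setIntegral_toReal_rnDeriv hν, hdecomp,
      integral_biUnion_finset S.toFinset (fun v _ => hatom v)
        ((atom_disj t).mono (Set.subset_univ _))
        (fun v _ => hint.integrableOn)]
    have hms : ν (⋃ v ∈ S.toFinset, proj X t ⁻¹' {v}) = ∑ v ∈ S.toFinset, ν (proj X t ⁻¹' {v}) :=
      measure_biUnion_finset ((atom_disj t).mono (Set.subset_univ _)) (fun v _ => hatom v)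
    rw [Measure.real, hms, ENNReal.toReal_sum (fun v _ => measure_ne_top _ _)]
    exact Finset.sum_congr rfl fun v _ => hatomint v
  · exact StronglyMeasurable.aestronglyMeasurable
      (Measurable.stronglyMeasurable
        ((measurable_of_countable h).comp (Measurable.of_comap_le le_rfl)))

end CE

/-- `Q(x_{<t})`: the `Q`-measure of the cylinder set of sequences beginning with `x_{<t}`,
as a real number. -/
noncomputable def prefProb {X : Type*} [MeasurableSpace X]
    (Q : Measure (ℕ → X)) (x : ℕ → X) (t : ℕ) : ℝ :=
  (Q (cyl x t)).toReal

/-- The posterior weight `w(Q i | x_{<t}) = w(Q i)·(Q i)(x_{<t}) / ∑_{j} w(Q j)·(Q j)(x_{<t})`. -/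
noncomputable def post {X ι : Type*} [MeasurableSpace X]
    (w : ι → ℝ) (Q : ι → Measure (ℕ → X)) (i : ι) (x : ℕ → X) (t : ℕ) : ℝ :=
  w i * prefProb (Q i) x t / ∑' j, w j * prefProb (Q j) x t

/-- **Sum of limits.** With probability 1 over sequences sampled from the true measure
`P = Q i₀ ∈ ℳ`: the limit `lim_{t→∞} w(Q | x_{<t})` exists for every `Q ∈ ℳ`, and the sum
over `Q ∈ ℳ` of these limits equals 1. -/
theorem sum_of_limits
    {X : Type*} [Fintype X] [Nonempty X] [MeasurableSpace X] [MeasurableSingletonClass X]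
    {ι : Type*} [Countable ι]
    (Q : ι → Measure (ℕ → X)) (hQ : ∀ i, IsProbabilityMeasure (Q i))
    (w : ι → ℝ) (hw : ∀ i, 0 < w i) (hw1 : ∑' i, w i = 1)
    (i₀ : ι) :
    ∀ᵐ x ∂(Q i₀), ∃ L : ι → ℝ,
      (∀ i : ι, Tendsto (fun t => post w Q i x t) atTop (nhds (L i))) ∧
      ∑' i, L i = 1 := by
  classical
  set ξ : Measure (ℕ → X) := Measure.sum (fun i => ENNReal.ofReal (w i) • Q i) with hξ
  have hwsum : Summable w := by
    by_contra h
    rw [tsum_eq_zero_of_not_summable h] at hw1; norm_num at hw1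
  have hξapp : ∀ s : Set (ℕ → X), MeasurableSet s →
      ξ s = ∑' i, ENNReal.ofReal (w i) * Q i s := by
    intro s hs
    rw [hξ, Measure.sum_apply _ hs]
    simp only [Measure.smul_apply, smul_eq_mul]
  haveI : IsProbabilityMeasure ξ := by
    constructor
    rw [hξapp _ MeasurableSet.univ]
    simp only [measure_univ, mul_one]
    rw [← ENNReal.ofReal_tsum_of_nonneg (fun i => (hw i).le) hwsum, hw1, ENNReal.ofReal_one]
  have habs : ∀ i, Q i ≪ ξ := by
    intro i
    refine Measure.AbsolutelyContinuous.mk fun s hs hs0 => ?_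
    have h1 := hξapp s hs
    rw [hs0] at h1
    have h0 : ENNReal.ofReal (w i) * Q i s = 0 := by
      have := ENNReal.tsum_eq_zero.mp h1.symm i
      exact this
    rcases mul_eq_zero.mp h0 with h | h
    · exact absurd h (by simp [ENNReal.ofReal_eq_zero, not_le, hw i])
    · exact h
  -- a.e. convergence of the ratios
  have hconv : ∀ i, ∀ᵐ x ∂ξ, Tendsto
      (fun t => (Q i (cyl x t)).toReal / (ξ (cyl x t)).toReal) atTop
      (nhds ((Q i).rnDeriv ξ x).toReal) := by
    intro i
    haveI := hQ i
    have hint : Integrable (fun x => ((Q i).rnDeriv ξ x).toReal) ξ :=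
      Measure.integrable_toReal_rnDeriv
    have hmeas : StronglyMeasurable[⨆ t, filt X t]
        (fun x => ((Q i).rnDeriv ξ x).toReal) := by
      rw [iSup_filt]
      exact (Measure.measurable_rnDeriv _ _).ennreal_toReal.stronglyMeasurable
    have hlevy := hint.tendsto_ae_condExp hmeas
    have hce : ∀ᵐ x ∂ξ, ∀ t,
        (Q i (cyl x t)).toReal / (ξ (cyl x t)).toReal
          = (ξ[fun x => ((Q i).rnDeriv ξ x).toReal | filt X t]) x :=
      ae_all_iff.2 fun t => condexp_eq ξ (Q i) (habs i) t
    filter_upwards [hlevy, hce] with x h1 h2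
    exact Tendsto.congr (fun t => (h2 t).symm) h1
  -- the real limits sum to 1 a.e.
  have hsum1 : ∀ᵐ x ∂ξ, ∑' i, ENNReal.ofReal (w i) * (Q i).rnDeriv ξ x = 1 := by
    have hmeasi : ∀ i, Measurable (fun x => ENNReal.ofReal (w i) * (Q i).rnDeriv ξ x) :=
      fun i => measurable_const.mul (Measure.measurable_rnDeriv _ _)
    have hwd : ξ.withDensity (fun x => ∑' i, ENNReal.ofReal (w i) * (Q i).rnDeriv ξ x) = ξ := by
      have h1 : (fun x => ∑' i, ENNReal.ofReal (w i) * (Q i).rnDeriv ξ x)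
          = ∑' i, (fun x => ENNReal.ofReal (w i) * (Q i).rnDeriv ξ x) := by
        funext x
        rw [ENNReal.tsum_apply]
      rw [h1, withDensity_tsum hmeasi]
      rw [hξ]
      congr 1
      funext i
      have h2 : (fun x => ENNReal.ofReal (w i) * (Q i).rnDeriv ξ x)
          = ENNReal.ofReal (w i) • (Q i).rnDeriv ξ := rfl
      rw [h2, withDensity_smul _ (Measure.measurable_rnDeriv _ _),
        Measure.withDensity_rnDeriv_eq _ _ (habs i)]
    have h3 := Measure.rnDeriv_withDensity ξ
      (f := fun x => ∑' i, ENNReal.ofReal (w i) * (Q i).rnDeriv ξ x)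
      (Measurable.ennreal_tsum hmeasi)
    rw [hwd] at h3
    filter_upwards [h3.symm, Measure.rnDeriv_self ξ] with x hx hx'
    rw [hx, hx']
  have hsum2 : ∀ᵐ x ∂ξ, ∑' i, w i * ((Q i).rnDeriv ξ x).toReal = 1 := by
    filter_upwards [hsum1] with x hx
    have hne : ∀ i, ENNReal.ofReal (w i) * (Q i).rnDeriv ξ x ≠ ∞ := by
      intro i
      intro hcon
      have := ENNReal.le_tsum (f := fun i => ENNReal.ofReal (w i) * (Q i).rnDeriv ξ x) i
      rw [hcon, hx, top_le_iff] at this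
      exact ENNReal.one_ne_top this
    calc ∑' i, w i * ((Q i).rnDeriv ξ x).toReal
        = ∑' i, (ENNReal.ofReal (w i) * (Q i).rnDeriv ξ x).toReal := by
          refine tsum_congr fun i => ?_
          rw [ENNReal.toReal_mul, ENNReal.toReal_ofReal (hw i).le]
      _ = (∑' i, ENNReal.ofReal (w i) * (Q i).rnDeriv ξ x).toReal :=
          (ENNReal.tsum_toReal_eq hne).symm
      _ = 1 := by rw [hx]; simp
  -- denominator identity
  have hden : ∀ (x : ℕ → X) (t : ℕ),
      (∑' j, w j * prefProb (Q j) x t) = (ξ (cyl x t)).toReal := by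
    intro x t
    rw [hξapp _ (measurableSet_cyl x t),
      ENNReal.tsum_toReal_eq (fun j => ENNReal.mul_ne_top ENNReal.ofReal_ne_top
        (measure_ne_top _ _))]
    refine tsum_congr fun j => ?_
    rw [ENNReal.toReal_mul, ENNReal.toReal_ofReal (hw j).le]
    rfl
  -- transfer to Q i₀ and conclude
  have hae : ∀ᵐ x ∂ξ, (∀ i, Tendsto
      (fun t => (Q i (cyl x t)).toReal / (ξ (cyl x t)).toReal) atTop
      (nhds ((Q i).rnDeriv ξ x).toReal)) ∧
      ∑' i, w i * ((Q i).rnDeriv ξ x).toReal = 1 :=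
    (ae_all_iff.2 hconv).and hsum2
  have haeQ := (habs i₀).ae_le hae
  filter_upwards [haeQ] with x hx
  obtain ⟨h1, h2⟩ := hx
  refine ⟨fun i => w i * ((Q i).rnDeriv ξ x).toReal, fun i => ?_, h2⟩
  refine Tendsto.congr (fun t => ?_) ((h1 i).const_mul (w i))
  show w i * ((Q i (cyl x t)).toReal / (ξ (cyl x t)).toReal) = post w Q i x t
  rw [post, prefProb, hden, mul_div_assoc]
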